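/- Let n, k be natural numbers with k ≥ 1, let L be a real symmetric positive semidefinite n×n matrix with rank L = n − 1 and L · 1ₙ = 0, let M be a real n×k matrix, and let P = [I | M] be the real n×(n+k) block matrix whose first n columns form the identity. Suppose P · 1_{n+k} = c · 1ₙ for some real scalar c. Then there exists a nonzero vector v ∈ ℝ^{n+k} such that (Pᵀ L P) v = 0 and v is orthogonal to the all-ones vector 1_{n+k}. -/

import Mathlib

open Matrix

/-- If `L` is symmetric PSD of rank `n − 1` with `L · 1 = 0`, `P = [I | M]` maps the
all-ones vector to a multiple of the all-ones vector, and `k ≥ 1`, then there is a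
nonzero vector in the kernel of `Pᵀ L P` orthogonal to the all-ones vector. -/
theorem exists_kernel_vector_orthogonal_to_ones (n k : ℕ) (hk : 1 ≤ k)
    (L : Matrix (Fin n) (Fin n) ℝ) (hL : L.PosSemidef)
    (hrank : (L.rank : ℤ) = (n : ℤ) - 1)
    (hLone : L.mulVec (fun _ => 1) = 0)
    (M : Matrix (Fin n) (Fin k) ℝ)
    (P : Matrix (Fin n) (Fin n ⊕ Fin k) ℝ)
    (hP : P = Matrix.fromCols 1 M) (c : ℝ)
    (hPone : P.mulVec (fun _ => 1) = fun _ => c) :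
    ∃ v : Fin n ⊕ Fin k → ℝ, v ≠ 0 ∧ (Pᵀ * L * P).mulVec v = 0 ∧
      v ⬝ᵥ (fun _ => 1) = 0 := by
  classical
  have hn : 1 ≤ n := by omega
  set u : Fin n ⊕ Fin k → ℝ := fun _ => 1 with hu
  have hNpos : (0 : ℝ) < (n : ℝ) + (k : ℝ) := by positivity
  have hNne : ((n : ℝ) + (k : ℝ)) ≠ 0 := ne_of_gt hNpos
  -- kernel criterion
  have hker : ∀ x : Fin n ⊕ Fin k → ℝ, L.mulVec (P.mulVec x) = 0 →
      (Pᵀ * L * P).mulVec x = 0 := by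
    intro x hx
    rw [Matrix.mul_assoc, ← Matrix.mulVec_mulVec, ← Matrix.mulVec_mulVec, hx,
      Matrix.mulVec_zero]
  -- u is in the kernel
  have hLu : L.mulVec (P.mulVec u) = 0 := by
    have h1 : P.mulVec u = c • (fun _ : Fin n => (1 : ℝ)) := by
      rw [hPone]; funext i; simp
    rw [h1, Matrix.mulVec_smul, hLone, smul_zero]
  have huker : (Pᵀ * L * P).mulVec u = 0 := hker u hLu
  -- the special vector a
  set i0 : Fin k := ⟨0, hk⟩ with hi0
  set e0 : Fin k → ℝ := Pi.single i0 1 with he0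
  have hsum_e0 : ∑ j, e0 j = 1 := by simp [he0]
  set a : Fin n ⊕ Fin k → ℝ := Sum.elim (-(M.mulVec e0)) e0 with ha
  have hPa : P.mulVec a = 0 := by
    rw [hP, ha, Matrix.fromCols_mulVec_sumElim]
    funext i
    simp [Matrix.one_mulVec, Matrix.mulVec_neg]
  have haker : (Pᵀ * L * P).mulVec a = 0 := hker a (by rw [hPa, Matrix.mulVec_zero])
  -- sums
  have hsum_u : ∑ i, u i = (n : ℝ) + (k : ℝ) := by simp [hu, mul_comm]
  have hdot : ∀ v : Fin n ⊕ Fin k → ℝ, v ⬝ᵥ (fun _ => (1:ℝ)) = ∑ i, v i := by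
    intro v; simp [dotProduct]
  set s : ℝ := (∑ i, a i) / ((n : ℝ) + (k : ℝ)) with hs
  set w : Fin n ⊕ Fin k → ℝ := a - s • u with hw
  have hwker : (Pᵀ * L * P).mulVec w = 0 := by
    rw [hw, Matrix.mulVec_sub, Matrix.mulVec_smul, haker, huker, smul_zero, sub_zero]
  have hwdot : w ⬝ᵥ (fun _ => (1:ℝ)) = 0 := by
    rw [hdot]
    simp only [hw, Pi.sub_apply, Pi.smul_apply, smul_eq_mul]
    rw [Finset.sum_sub_distrib, ← Finset.mul_sum, hsum_u, hs]
    field_simp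
    ring
  by_cases hwz : w = 0
  · -- degenerate case : a = s • u
    have hval : ∀ i, a i = s * u i := by
      intro i
      have := congrFun hwz i
      simp [hw] at this
      linarith [this]
    have hs1 : s = 1 := by
      have := hval (Sum.inr i0)
      simp [ha, he0, hu] at this
      linarith
    have hMe : ∀ i : Fin n, (M.mulVec e0) i = -1 := by
      intro i
      have := hval (Sum.inl i)
      rw [hs1] at this
      simp [ha, hu] at this
      linarith
    set b : Fin n ⊕ Fin k → ℝ := Sum.elim 0 e0 with hb
    have hPb : P.mulVec b = -(fun _ : Fin n => (1:ℝ)) := by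
      rw [hP, hb, Matrix.fromCols_mulVec_sumElim]
      funext i
      simp [Matrix.one_mulVec, hMe i]
    have hbker : (Pᵀ * L * P).mulVec b = 0 := by
      refine hker b ?_
      rw [hPb, Matrix.mulVec_neg, hLone, neg_zero]
    set t : ℝ := 1 / ((n : ℝ) + (k : ℝ)) with ht
    refine ⟨b - t • u, ?_, ?_, ?_⟩
    · intro h0
      have := congrFun h0 (Sum.inl ⟨0, hn⟩)
      simp [hb, hu, ht] at this
      exact hNne (by linarith [this])
    · rw [Matrix.mulVec_sub, Matrix.mulVec_smul, hbker, huker, smul_zero, sub_zero]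
    · rw [hdot]
      simp only [Pi.sub_apply, Pi.smul_apply, smul_eq_mul]
      rw [Finset.sum_sub_distrib, ← Finset.mul_sum, hsum_u, ht]
      have hsum_b : ∑ i, b i = 1 := by
        rw [hb, Fintype.sum_sum_type]
        simp [hsum_e0]
      rw [hsum_b]
      field_simp
      ring
  · exact ⟨w, hwz, hwker, hwdot⟩
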